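/- Let P ⊂ ℝ^3 be the 3-simplex with vertices (0,0,0), (1,0,0), (0,4,0) and (1,0,3). Then P is IDP and its h*-vector is (1, 5, 6). In particular, an IDP lattice polytope of degree 2 may satisfy (1 + h*_1) ∣ h*_2 and h*_1 < h*_2. -/

import Mathlib

open scoped BigOperators Pointwise

namespace LatticePolytope

variable (n : ℕ)

/-- The real vector corresponding to an integer vector. -/
def toReal (x : Fin n → ℤ) : Fin n → ℝ := fun i => (x i : ℝ)

/-- The real point of `ℝ^n × ℝ` corresponding to an integer point of `ℤ^n × ℤ`. -/
def toRealPair (z : (Fin n → ℤ) × ℤ) : (Fin n → ℝ) × ℝ := (toReal n z.1, (z.2 : ℝ))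

/-- `P` is a lattice polytope: the convex hull of finitely many integer points. -/
def IsLatticePolytope (P : Set (Fin n → ℝ)) : Prop :=
  ∃ V : Finset (Fin n → ℤ), P = convexHull ℝ (toReal n '' ↑V)

/-- The dimension of a polytope, i.e. the dimension of its affine span. -/
noncomputable def dimP (P : Set (Fin n → ℝ)) : ℕ := Module.finrank ℝ ↥(vectorSpan ℝ P)

/-- The number of lattice points of the `k`-th dilate `kP` of `P`, as an integer. -/
noncomputable def ehr (P : Set (Fin n → ℝ)) (k : ℕ) : ℤ :=
  (Set.ncard {x : Fin n → ℤ | toReal n x ∈ (k : ℝ) • P} : ℤ)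

/-- `P` has `h^*`-"vector" given by the coefficient function `h : ℕ → ℕ` (entries beyond the
degree being `0`), with respect to the Ehrhart series identity
`∑_k #(kP ∩ ℤ^n) t^k = (∑_i h_i t^i) / (1-t)^{d+1}`. -/
def HasHStar (P : Set (Fin n → ℝ)) (d : ℕ) (h : ℕ → ℕ) : Prop :=
  (PowerSeries.mk fun k => ehr n P k) * (1 - PowerSeries.X) ^ (d + 1) =
    PowerSeries.mk fun i => (h i : ℤ)

/-- `P` has the integer decomposition property: every lattice point of `kP` is a sum of `k`
lattice points of `P`. -/
def IsIDP (P : Set (Fin n → ℝ)) : Prop :=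
  ∀ (k : ℕ) (x : Fin n → ℤ), toReal n x ∈ (k : ℝ) • P →
    ∃ f : Fin k → Fin n → ℤ, (∀ j, toReal n (f j) ∈ P) ∧ ∑ j, f j = x

/-- The set `P × {1} ⊆ ℝ^n × ℝ`. -/
def liftSet (P : Set (Fin n → ℝ)) : Set ((Fin n → ℝ) × ℝ) := {x | x.1 ∈ P ∧ x.2 = 1}

/-- The subgroup of `ℤ^n × ℤ` generated by the lattice points of `P × {1}`. -/
def latticeGroup (P : Set (Fin n → ℝ)) : AddSubgroup ((Fin n → ℤ) × ℤ) :=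
  AddSubgroup.closure {z | toRealPair n z ∈ liftSet n P}

/-- `P` is spanning: the lattice points of `P × {1}` generate the group of all integer points
of the linear span of `P × {1}`. -/
def IsSpanning (P : Set (Fin n → ℝ)) : Prop :=
  ∀ z : (Fin n → ℤ) × ℤ,
    z ∈ latticeGroup n P ↔ toRealPair n z ∈ (Submodule.span ℝ (liftSet n P) : Set _)

/-- The cone over `P × {1}` in `ℝ^n × ℝ`. -/
def coneOver (P : Set (Fin n → ℝ)) : Set ((Fin n → ℝ) × ℝ) :=
  {x | ∃ t : ℝ, 0 ≤ t ∧ ∃ p ∈ P, x = t • (p, (1 : ℝ))}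

/-- The affine monoid `M_P` generated by the lattice points of `P × {1}`. -/
def MP (P : Set (Fin n → ℝ)) : AddSubmonoid ((Fin n → ℤ) × ℤ) :=
  AddSubmonoid.closure {z | toRealPair n z ∈ liftSet n P}

/-- The monoid `M̄_P` of all lattice points of the cone over `P × {1}`; as a set it is a
submonoid of `ℤ^n × ℤ`, and it is the integral closure of `M_P`. -/
def MBar (P : Set (Fin n → ℝ)) : AddSubmonoid ((Fin n → ℤ) × ℤ) :=
  AddSubmonoid.closure {z | toRealPair n z ∈ coneOver n P}

/-- The number of points of the `k`-th dilate of `P` lying in the sublattice generated by the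
lattice points of `P` (at height `k`); this is the Ehrhart counting function of `P̃`. -/
noncomputable def ehrSub (P : Set (Fin n → ℝ)) (k : ℕ) : ℤ :=
  (Set.ncard {x : Fin n → ℤ |
    toReal n x ∈ (k : ℝ) • P ∧ (x, (k : ℤ)) ∈ latticeGroup n P} : ℤ)

/-- The `h^*`-coefficient function of `P̃`, the polytope `P` regarded with respect to the
lattice generated by its lattice points. -/
def HasHStarSub (P : Set (Fin n → ℝ)) (d : ℕ) (h : ℕ → ℕ) : Prop :=
  (PowerSeries.mk fun k => ehrSub n P k) * (1 - PowerSeries.X) ^ (d + 1) =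
    PowerSeries.mk fun i => (h i : ℤ)

/-- The Ehrhart ring `k[P]` is level: its canonical module, i.e. the module spanned by the
lattice points of the relative interior of the cone over `P`, is generated in a single degree
over the monoid of lattice points of the cone. -/
def IsLevel (P : Set (Fin n → ℝ)) : Prop :=
  ∃ m : ℤ, ∀ z : (Fin n → ℤ) × ℤ, toRealPair n z ∈ intrinsicInterior ℝ (coneOver n P) →
    ∃ a b : (Fin n → ℤ) × ℤ, toRealPair n a ∈ intrinsicInterior ℝ (coneOver n P) ∧
      a.2 = m ∧ toRealPair n b ∈ coneOver n P ∧ z = a + b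

end LatticePolytope

namespace IDPAux
open LatticePolytope

@[simp] lemma toReal_apply (v : Fin 3 → ℤ) (i : Fin 3) : toReal 3 v i = (v i : ℝ) := rfl

def H : Set (Fin 3 → ℝ) := {v | 0 ≤ v 1 ∧ 0 ≤ v 2 ∧ v 2 ≤ 3 * v 0 ∧ 4 * v 0 + v 1 ≤ 4}

def Vset : Set (Fin 3 → ℤ) := {![0,0,0], ![1,0,0], ![0,4,0], ![1,0,3]}

lemma convex_H : Convex ℝ H := by
  intro x hx y hy a b ha hb hab
  obtain ⟨h1,h2,h3,h4⟩ := hx; obtain ⟨g1,g2,g3,g4⟩ := hy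
  refine ⟨?_,?_,?_,?_⟩ <;>
    simp only [Pi.add_apply, Pi.smul_apply, smul_eq_mul] <;>
    nlinarith [mul_nonneg ha h1, mul_nonneg hb g1, mul_nonneg ha h2, mul_nonneg hb g2,
      mul_le_mul_of_nonneg_left h3 ha, mul_le_mul_of_nonneg_left g3 hb,
      mul_le_mul_of_nonneg_left h4 ha, mul_le_mul_of_nonneg_left g4 hb]

lemma P_subset_H : convexHull ℝ (toReal 3 '' Vset) ⊆ H := by
  apply convexHull_min _ convex_H
  rintro _ ⟨v, (rfl|rfl|rfl|rfl), rfl⟩ <;> refine ⟨?_,?_,?_,?_⟩ <;> simp [H]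

lemma H_subset_P : H ⊆ convexHull ℝ (toReal 3 '' Vset) := by
  rintro v ⟨h1, h2, h3, h4⟩
  have key : v = ∑ i : Fin 4,
      (![1 - v 0 - v 1 / 4, v 0 - v 2 / 3, v 1 / 4, v 2 / 3] i) •
      (![toReal 3 ![0,0,0], toReal 3 ![1,0,0], toReal 3 ![0,4,0], toReal 3 ![1,0,3]] i) := by
    funext j
    simp only [Fin.sum_univ_four, Pi.add_apply, Pi.smul_apply, smul_eq_mul]
    fin_cases j <;> simp <;> ring
  rw [key]
  apply Convex.sum_mem (convex_convexHull ℝ _)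
  · intro i _; fin_cases i <;> simp <;> linarith
  · simp [Fin.sum_univ_four]; ring
  · intro i _
    apply subset_convexHull
    fin_cases i <;> exact ⟨_, by simp [Vset], rfl⟩

lemma P_eq_H : convexHull ℝ (toReal 3 '' Vset) = H :=
  le_antisymm P_subset_H H_subset_P

lemma mem_smul_H (k : ℕ) (x : Fin 3 → ℝ) :
    x ∈ (k : ℝ) • H ↔ 0 ≤ x 1 ∧ 0 ≤ x 2 ∧ x 2 ≤ 3 * x 0 ∧ 4 * x 0 + x 1 ≤ 4 * k := by
  rcases Nat.eq_zero_or_pos k with rfl | hk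
  · have hne : H.Nonempty := ⟨0, by simp [H]⟩
    rw [Nat.cast_zero, Set.zero_smul_set hne]
    constructor
    · rintro rfl; simp
    · rintro ⟨h1, h2, h3, h4⟩
      have e0 : x 0 = 0 := by push_cast at h4; linarith
      have e1 : x 1 = 0 := by push_cast at h4; linarith
      have e2 : x 2 = 0 := by linarith
      funext i; fin_cases i <;> simpa
  · have hkR : (0:ℝ) < k := by exact_mod_cast hk
    have hinv : (0:ℝ) ≤ ((k:ℝ))⁻¹ := by positivity
    constructor
    · rintro ⟨y, ⟨h1, h2, h3, h4⟩, rfl⟩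
      simp only [Pi.smul_apply, smul_eq_mul]
      refine ⟨by positivity, by positivity, ?_, ?_⟩
      · nlinarith [mul_le_mul_of_nonneg_left h3 hkR.le]
      · nlinarith [mul_le_mul_of_nonneg_left h4 hkR.le]
    · rintro ⟨h1, h2, h3, h4⟩
      refine ⟨((k:ℝ))⁻¹ • x, ⟨?_, ?_, ?_, ?_⟩, smul_inv_smul₀ (ne_of_gt hkR) x⟩ <;>
        simp only [Pi.smul_apply, smul_eq_mul]
      · positivity
      · positivity
      · nlinarith [mul_le_mul_of_nonneg_left h3 hinv]
      · nlinarith [mul_le_mul_of_nonneg_left h4 hinv, inv_mul_cancel₀ (ne_of_gt hkR)]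

noncomputable def F (k : ℕ) : Finset (Fin 3 → ℤ) :=
  (Finset.range (k+1)).biUnion fun a =>
    ((Finset.Icc (0:ℤ) (4*k - 4*a)) ×ˢ (Finset.Icc (0:ℤ) (3*a))).image
      fun p => ![(a:ℤ), p.1, p.2]

lemma vec_eta (x : Fin 3 → ℤ) : x = ![x 0, x 1, x 2] := by
  funext i; fin_cases i <;> rfl

lemma mem_F (k : ℕ) (x : Fin 3 → ℤ) :
    x ∈ F k ↔ 0 ≤ x 1 ∧ 0 ≤ x 2 ∧ x 2 ≤ 3 * x 0 ∧ 4 * x 0 + x 1 ≤ 4 * k := by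
  constructor
  · intro hx
    simp only [F, Finset.mem_biUnion, Finset.mem_range, Finset.mem_image,
      Finset.mem_product, Finset.mem_Icc] at hx
    obtain ⟨a, ha, ⟨p, q⟩, ⟨⟨hp0, hp1⟩, hq0, hq1⟩, rfl⟩ := hx
    have hak : (a : ℤ) ≤ k := by exact_mod_cast Nat.lt_succ_iff.mp ha
    refine ⟨by simpa using hp0, by simpa using hq0, by simpa using hq1, ?_⟩
    simp only [Matrix.cons_val_zero, Matrix.cons_val_one, Matrix.head_cons]
    linarith
  · rintro ⟨h1, h2, h3, h4⟩
    have h0 : 0 ≤ x 0 := by linarith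
    have h0k : x 0 ≤ (k : ℤ) := by linarith
    simp only [F, Finset.mem_biUnion, Finset.mem_range, Finset.mem_image,
      Finset.mem_product, Finset.mem_Icc]
    refine ⟨(x 0).toNat, ?_, (x 1, x 2), ⟨⟨h1, ?_⟩, h2, ?_⟩, ?_⟩
    · omega
    · push_cast [Int.toNat_of_nonneg h0]; linarith
    · push_cast [Int.toNat_of_nonneg h0]; linarith
    · rw [Int.toNat_of_nonneg h0]; exact (vec_eta x).symm

lemma card_F (k : ℕ) :
    ((F k).card : ℤ) = ∑ a ∈ Finset.range (k+1), (4*(k:ℤ) - 4*a + 1) * (3*a + 1) := by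
  have hinj : ∀ a : ℕ, Function.Injective (fun p : ℤ × ℤ => ![(a:ℤ), p.1, p.2]) := by
    intro a p q h
    have h1 := congrFun h 1
    have h2 := congrFun h 2
    simp at h1 h2
    exact Prod.ext h1 h2
  have hdisj : ∀ a ∈ Finset.range (k+1), ∀ b ∈ Finset.range (k+1), a ≠ b →
      Disjoint (((Finset.Icc (0:ℤ) (4*k - 4*a)) ×ˢ (Finset.Icc (0:ℤ) (3*a))).image
        (fun p => ![(a:ℤ), p.1, p.2]))
        (((Finset.Icc (0:ℤ) (4*k - 4*b)) ×ˢ (Finset.Icc (0:ℤ) (3*b))).image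
        (fun p => ![(b:ℤ), p.1, p.2])) := by
    intro a _ b _ hab
    rw [Finset.disjoint_left]
    rintro x hx hy
    simp only [Finset.mem_image] at hx hy
    obtain ⟨p, _, rfl⟩ := hx
    obtain ⟨q, _, hq⟩ := hy
    have := congrFun hq 0
    simp at this
    exact hab (by exact_mod_cast this.symm)
  rw [F, Finset.card_biUnion hdisj]
  push_cast
  apply Finset.sum_congr rfl
  intro a ha
  have hak : (a : ℤ) ≤ k := by exact_mod_cast Nat.lt_succ_iff.mp (Finset.mem_range.mp ha)
  rw [Finset.card_image_of_injective _ (hinj a), Finset.card_product, Int.card_Icc, Int.card_Icc]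
  have e1 : ((4*(k:ℤ) - 4*(a:ℤ) + 1 - 0).toNat : ℤ) = 4*(k:ℤ) - 4*(a:ℤ) + 1 := by omega
  have e2 : ((3*(a:ℤ) + 1 - 0).toNat : ℤ) = 3*(a:ℤ) + 1 := by omega
  rw [Nat.cast_mul, e1, e2]

lemma Tsum (k : ℕ) : 2 * ∑ a ∈ Finset.range (k+1), (3*(a:ℤ)+1) = ((k:ℤ)+1)*(3*k+2) := by
  induction k with
  | zero => simp
  | succ n ih => rw [Finset.sum_range_succ, mul_add, ih]; push_cast; ring

lemma Usum (k : ℕ) : 2 * ∑ a ∈ Finset.range (k+1), (a:ℤ)*(3*(a:ℤ)+1) = 2*(k:ℤ)*((k:ℤ)+1)^2 := by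
  induction k with
  | zero => simp
  | succ n ih => rw [Finset.sum_range_succ, mul_add, ih]; push_cast; ring

lemma sum_closed (k : ℕ) :
    2 * ∑ a ∈ Finset.range (k+1), (4*(k:ℤ) - 4*(a:ℤ) + 1) * (3*(a:ℤ) + 1) =
      ((k:ℤ)+1) * (4*(k:ℤ)^2 + 3*(k:ℤ) + 2) := by
  have expand : ∀ a ∈ Finset.range (k+1),
      (4*(k:ℤ) - 4*(a:ℤ) + 1) * (3*(a:ℤ) + 1)
        = (4*(k:ℤ)+1) * (3*(a:ℤ)+1) - 4*((a:ℤ)*(3*(a:ℤ)+1)) := by intros; ring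
  rw [Finset.sum_congr rfl expand, Finset.sum_sub_distrib, ← Finset.mul_sum, ← Finset.mul_sum]
  linear_combination (4*(k:ℤ)+1) * Tsum k - 4 * Usum k

lemma coeff_four (g : PowerSeries ℤ) (n : ℕ) :
    PowerSeries.coeff n (4 * g) = 4 * PowerSeries.coeff n g := by
  rw [show (4 : PowerSeries ℤ) = PowerSeries.C 4 from (map_ofNat _ 4).symm,
    PowerSeries.coeff_C_mul]

lemma coeff_six (g : PowerSeries ℤ) (n : ℕ) :
    PowerSeries.coeff n (6 * g) = 6 * PowerSeries.coeff n g := by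
  rw [show (6 : PowerSeries ℤ) = PowerSeries.C 6 from (map_ofNat _ 6).symm,
    PowerSeries.coeff_C_mul]

lemma coeff_prod (e : ℕ → ℤ) (n : ℕ) :
    PowerSeries.coeff n (PowerSeries.mk e * (1 - PowerSeries.X)^4) =
      e n - 4*(if 1 ≤ n then e (n-1) else 0) + 6*(if 2 ≤ n then e (n-2) else 0)
        - 4*(if 3 ≤ n then e (n-3) else 0) + (if 4 ≤ n then e (n-4) else 0) := by
  have expand : PowerSeries.mk e * (1 - PowerSeries.X)^4 =
      PowerSeries.mk e - 4*(PowerSeries.mk e * PowerSeries.X^1)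
        + 6*(PowerSeries.mk e * PowerSeries.X^2) - 4*(PowerSeries.mk e * PowerSeries.X^3)
        + PowerSeries.mk e * PowerSeries.X^4 := by ring
  rw [expand]
  simp only [map_add, map_sub, coeff_four, coeff_six, PowerSeries.coeff_mul_X_pow',
    PowerSeries.coeff_mk]

lemma hstar_of_vals (e : ℕ → ℤ)
    (hval : ∀ k : ℕ, 2 * e k = ((k:ℤ)+1) * (4*(k:ℤ)^2 + 3*(k:ℤ) + 2)) :
    (PowerSeries.mk e) * (1 - PowerSeries.X)^4 =
      PowerSeries.mk (fun i =>
        ((if i = 0 then 1 else if i = 1 then 5 else if i = 2 then 6 else 0 : ℕ) : ℤ)) := by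
  have e0 : e 0 = 1 := by have := hval 0; push_cast at this; linarith
  have e1 : e 1 = 9 := by have := hval 1; push_cast at this; linarith
  have e2 : e 2 = 36 := by have := hval 2; push_cast at this; linarith
  have e3 : e 3 = 94 := by have := hval 3; push_cast at this; linarith
  ext n
  rw [coeff_prod, PowerSeries.coeff_mk]
  rcases n with _|_|_|_|m
  · norm_num [e0]
  · norm_num [e0, e1]
  · norm_num [e0, e1, e2]
  · norm_num [e0, e1, e2, e3]
  · have key : 2 * (e (m+4) - 4 * e (m+3) + 6 * e (m+2) - 4 * e (m+1) + e m) = 0 := by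
      linear_combination (norm := (push_cast; ring))
        hval (m+4) - 4 * hval (m+3) + 6 * hval (m+2) - 4 * hval (m+1) + hval m
    have hne : (m + 4 ≠ 0) ∧ (m + 4 ≠ 1) ∧ (m + 4 ≠ 2) := by omega
    simp only [show (1:ℕ) ≤ m+4 by omega, show (2:ℕ) ≤ m+4 by omega,
      show (3:ℕ) ≤ m+4 by omega, show (4:ℕ) ≤ m+4 by omega, if_pos,
      if_neg hne.1, if_neg hne.2.1, if_neg hne.2.2, if_true]
    simp only [show m+4-1 = m+3 from rfl, show m+4-2 = m+2 from rfl,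
      show m+4-3 = m+1 from rfl, show m+4-4 = m from rfl]
    push_cast
    linarith

lemma clamp_sum (c : ℤ) (hc : 0 < c) : ∀ (m : ℕ), ∀ z : ℤ, 0 ≤ z → z ≤ c * m →
    ∑ j ∈ Finset.range m, max 0 (min c (z - c * j)) = z := by
  intro m
  induction m with
  | zero => intro z h1 h2; simp at h2 ⊢; omega
  | succ n ih =>
    intro z h1 h2
    rw [Finset.sum_range_succ]
    have hcast : ((n+1 : ℕ) : ℤ) = (n:ℤ) + 1 := by push_cast; ring
    rw [hcast] at h2
    rcases le_or_gt z (c * n) with h | h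
    · rw [ih z h1 h, max_eq_left (le_trans (min_le_right _ _) (by linarith))]
      ring
    · have hlast : max 0 (min c (z - c * (n:ℤ))) = z - c * n := by
        rw [min_eq_right (by nlinarith), max_eq_right (by linarith)]
      have hfront : ∀ j ∈ Finset.range n, max 0 (min c (z - c * (j:ℕ))) = c := by
        intro j hj
        have hjn : (j:ℤ) ≤ (n:ℤ) - 1 := by
          have := Finset.mem_range.mp hj; omega
        have : c * (j:ℤ) ≤ c * ((n:ℤ) - 1) := mul_le_mul_of_nonneg_left hjn hc.le
        rw [min_eq_left (by nlinarith), max_eq_right (by linarith)]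
      rw [Finset.sum_congr rfl hfront, Finset.sum_const, Finset.card_range, nsmul_eq_mul, hlast]
      ring

lemma memH_A (c : ℤ) (h0 : 0 ≤ c) (h3 : c ≤ 3) : toReal 3 ![1, 0, c] ∈ H := by
  refine ⟨?_, ?_, ?_, ?_⟩ <;> simp [toReal, H]
  · exact_mod_cast h0
  · exact_mod_cast h3

lemma memH_B (c : ℤ) (h0 : 0 ≤ c) (h4 : c ≤ 4) : toReal 3 ![0, c, 0] ∈ H := by
  refine ⟨?_, ?_, ?_, ?_⟩ <;> simp [toReal, H]
  · exact_mod_cast h0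
  · exact_mod_cast h4

lemma vectorSpan_top : vectorSpan ℝ (convexHull ℝ (toReal 3 '' Vset)) = ⊤ := by
  rw [eq_top_iff]
  intro v _
  have hmem : ∀ w ∈ Vset, toReal 3 w ∈ convexHull ℝ (toReal 3 '' Vset) :=
    fun w hw => subset_convexHull ℝ _ ⟨w, hw, rfl⟩
  have d1 : toReal 3 ![1,0,0] -ᵥ toReal 3 ![0,0,0] ∈ vectorSpan ℝ (convexHull ℝ (toReal 3 '' Vset)) :=
    vsub_mem_vectorSpan ℝ (hmem _ (by simp [Vset])) (hmem _ (by simp [Vset]))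
  have d2 : toReal 3 ![0,4,0] -ᵥ toReal 3 ![0,0,0] ∈ vectorSpan ℝ (convexHull ℝ (toReal 3 '' Vset)) :=
    vsub_mem_vectorSpan ℝ (hmem _ (by simp [Vset])) (hmem _ (by simp [Vset]))
  have d3 : toReal 3 ![1,0,3] -ᵥ toReal 3 ![1,0,0] ∈ vectorSpan ℝ (convexHull ℝ (toReal 3 '' Vset)) :=
    vsub_mem_vectorSpan ℝ (hmem _ (by simp [Vset])) (hmem _ (by simp [Vset]))
  have key : v = v 0 • (toReal 3 ![1,0,0] -ᵥ toReal 3 ![0,0,0])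
      + (v 1 / 4) • (toReal 3 ![0,4,0] -ᵥ toReal 3 ![0,0,0])
      + (v 2 / 3) • (toReal 3 ![1,0,3] -ᵥ toReal 3 ![1,0,0]) := by
    funext i
    simp only [Pi.add_apply, Pi.smul_apply, vsub_eq_sub, Pi.sub_apply, smul_eq_mul]
    fin_cases i <;> simp [toReal] <;> ring
  rw [key]
  exact Submodule.add_mem _ (Submodule.add_mem _ (Submodule.smul_mem _ _ d1)
    (Submodule.smul_mem _ _ d2)) (Submodule.smul_mem _ _ d3)

lemma dim_eq : dimP 3 (convexHull ℝ (toReal 3 '' Vset)) = 3 := by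
  rw [dimP, vectorSpan_top, finrank_top, Module.finrank_fin_fun]

lemma two_ehr (k : ℕ) :
    2 * ehr 3 (convexHull ℝ (toReal 3 '' Vset)) k
      = ((k:ℤ)+1) * (4*(k:ℤ)^2 + 3*(k:ℤ) + 2) := by
  have hset : {x : Fin 3 → ℤ | toReal 3 x ∈ (k:ℝ) • convexHull ℝ (toReal 3 '' Vset)}
      = ↑(F k) := by
    ext x
    rw [Set.mem_setOf_eq, P_eq_H, mem_smul_H, Finset.mem_coe, mem_F]
    simp only [toReal_apply]
    constructor
    · rintro ⟨a, b, c, d⟩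
      exact ⟨by exact_mod_cast a, by exact_mod_cast b, by exact_mod_cast c, by exact_mod_cast d⟩
    · rintro ⟨a, b, c, d⟩
      exact ⟨by exact_mod_cast a, by exact_mod_cast b, by exact_mod_cast c, by exact_mod_cast d⟩
  rw [ehr, hset, Set.ncard_coe_finset, card_F, sum_closed]

lemma isIDP : IsIDP 3 (convexHull ℝ (toReal 3 '' Vset)) := by
  intro k x hx
  rw [P_eq_H, mem_smul_H] at hx
  simp only [toReal_apply] at hx
  obtain ⟨h1', h2', h3', h4'⟩ := hx
  have h1 : 0 ≤ x 1 := by exact_mod_cast h1'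
  have h2 : 0 ≤ x 2 := by exact_mod_cast h2'
  have h3 : x 2 ≤ 3 * x 0 := by exact_mod_cast h3'
  have h4 : 4 * x 0 + x 1 ≤ 4 * k := by exact_mod_cast h4'
  have h0 : 0 ≤ x 0 := by linarith
  set t : ℕ := (x 0).toNat with htdef
  have ht : (t : ℤ) = x 0 := Int.toNat_of_nonneg h0
  have htk : t ≤ k := by omega
  set g : ℕ → Fin 3 → ℤ := fun j =>
    if j < t then ![1, 0, max 0 (min 3 (x 2 - 3*(j:ℤ)))]
    else ![0, max 0 (min 4 (x 1 - 4*((j - t : ℕ):ℤ))), 0] with hgdef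
  refine ⟨fun j => g (j:ℕ), ?_, ?_⟩
  · intro j
    rw [P_eq_H]
    by_cases hj : (j:ℕ) < t
    · rw [hgdef]; simp only [hj, if_true]
      exact memH_A _ (le_max_left _ _) (by omega)
    · rw [hgdef]; simp only [hj, if_false]
      exact memH_B _ (le_max_left _ _) (by omega)
  · have hrange : ∑ j : Fin k, g (j:ℕ) = ∑ j ∈ Finset.range k, g j :=
      Fin.sum_univ_eq_sum_range g k
    have hcast1 : ((k - t : ℕ) : ℤ) = (k : ℤ) - (t : ℤ) := by omega
    have hA : ∀ i, ∑ j ∈ Finset.Ico 0 t, g j i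
        = ∑ j ∈ Finset.range t, (![1, 0, max 0 (min 3 (x 2 - 3*(j:ℤ)))] : Fin 3 → ℤ) i := by
      intro i
      rw [← Finset.range_eq_Ico]
      exact Finset.sum_congr rfl fun j hj => by
        rw [hgdef]; simp only [Finset.mem_range.mp hj, if_true]
    have hB : ∀ i, ∑ j ∈ Finset.Ico t k, g j i
        = ∑ j ∈ Finset.range (k - t), (![0, max 0 (min 4 (x 1 - 4*(j:ℤ))), 0] : Fin 3 → ℤ) i := by
      intro i
      rw [Finset.sum_Ico_eq_sum_range]
      exact Finset.sum_congr rfl fun j hj => by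
        rw [hgdef]; simp only [show ¬ (t + j < t) by omega, if_false, Nat.add_sub_cancel_left]
    have c0 : ∑ j ∈ Finset.range t, (![1, 0, max 0 (min 3 (x 2 - 3*(j:ℤ)))] : Fin 3 → ℤ) 0
        + ∑ j ∈ Finset.range (k - t), (![0, max 0 (min 4 (x 1 - 4*(j:ℤ))), 0] : Fin 3 → ℤ) 0
        = x 0 := by
      simp only [Matrix.cons_val_zero, Finset.sum_const, Finset.card_range, nsmul_eq_mul,
        mul_one, mul_zero, add_zero]
      omega
    have c1 : ∑ j ∈ Finset.range t, (![1, 0, max 0 (min 3 (x 2 - 3*(j:ℤ)))] : Fin 3 → ℤ) 1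
        + ∑ j ∈ Finset.range (k - t), (![0, max 0 (min 4 (x 1 - 4*(j:ℤ))), 0] : Fin 3 → ℤ) 1
        = x 1 := by
      simp only [show ∀ a b c : ℤ, (![a,b,c] : Fin 3 → ℤ) 1 = b from fun a b c => rfl,
        Finset.sum_const, Finset.card_range,
        nsmul_eq_mul, mul_zero, zero_add]
      exact clamp_sum 4 (by norm_num) (k - t) (x 1) h1 (by rw [hcast1]; omega)
    have c2 : ∑ j ∈ Finset.range t, (![1, 0, max 0 (min 3 (x 2 - 3*(j:ℤ)))] : Fin 3 → ℤ) 2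
        + ∑ j ∈ Finset.range (k - t), (![0, max 0 (min 4 (x 1 - 4*(j:ℤ))), 0] : Fin 3 → ℤ) 2
        = x 2 := by
      simp only [show ∀ a b c : ℤ, (![a,b,c] : Fin 3 → ℤ) 2 = c from fun a b c => rfl,
        Finset.sum_const, Finset.card_range, nsmul_eq_mul, mul_zero, add_zero]
      exact clamp_sum 3 (by norm_num) t (x 2) h2 (by rw [ht]; omega)
    rw [hrange]
    funext i
    rw [Finset.sum_apply, Finset.range_eq_Ico,
      ← Finset.sum_Ico_consecutive _ (Nat.zero_le t) htk, hA i, hB i]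
    fin_cases i
    · exact c0
    · exact c1
    · exact c2

end IDPAux

open LatticePolytope in
/-- The 3-simplex with vertices `(0,0,0)`, `(1,0,0)`, `(0,4,0)`, `(1,0,3)` is IDP and has
`h^*`-vector `(1, 5, 6)`; in particular an IDP lattice polytope of degree 2 may satisfy
`(1 + h₁*) ∣ h₂*` and `h₁* < h₂*`. -/
theorem IDP_example_hstar_one_five_six :
    dimP 3 (convexHull ℝ (toReal 3 ''
        {![0,0,0], ![1,0,0], ![0,4,0], ![1,0,3]})) = 3 ∧
    IsIDP 3 (convexHull ℝ (toReal 3 ''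
        {![0,0,0], ![1,0,0], ![0,4,0], ![1,0,3]})) ∧
    HasHStar 3 (convexHull ℝ (toReal 3 ''
        {![0,0,0], ![1,0,0], ![0,4,0], ![1,0,3]})) 3
      (fun i => if i = 0 then 1 else if i = 1 then 5 else if i = 2 then 6 else 0) ∧
    (1 + 5) ∣ 6 ∧ 5 < 6 := by
  refine ⟨IDPAux.dim_eq, IDPAux.isIDP, ?_, by norm_num, by norm_num⟩
  exact IDPAux.hstar_of_vals _ (fun k => IDPAux.two_ehr k)
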